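/- In an e-ring, for e ∈ E the following are equivalent: (i) whenever a,b,a+b ∈ E with a,b ≤ e, then a+b ≤ e; (ii) the only d ∈ E with d ≤ e and d ≤ 1−e is d = 0; (iii) e² = e. -/
import Mathlib


/-- An e-ring: an associative unital ring `R` together with a set `E` of effects.
`E⁺` is the additive submonoid generated by `E` (the set of finite sums of effects). -/
structure ERing (R : Type*) [Ring R] where
  E : Set R
  zero_mem : (0:R) ∈ E
  one_mem : (1:R) ∈ E
  compl_mem : ∀ e ∈ E, 1 - e ∈ E
  ax_i : ∀ a ∈ AddSubmonoid.closure E, -a ∈ AddSubmonoid.closure E → a = 0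
  ax_ii : ∀ a ∈ AddSubmonoid.closure E, 1 - a ∈ AddSubmonoid.closure E → a ∈ E
  ax_iii : ∀ a ∈ AddSubmonoid.closure E, ∀ b ∈ AddSubmonoid.closure E,
    a * b = b * a → a * b ∈ AddSubmonoid.closure E
  ax_iv : ∀ a ∈ AddSubmonoid.closure E, ∀ b ∈ AddSubmonoid.closure E,
    a * b * a ∈ AddSubmonoid.closure E
  ax_v : ∀ a ∈ AddSubmonoid.closure E, ∀ b ∈ AddSubmonoid.closure E,
    a * b * a = 0 → a * b = 0 ∧ b * a = 0
  ax_vi : ∀ a ∈ AddSubmonoid.closure E, ∀ b ∈ AddSubmonoid.closure E,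
    (a - b) * (a - b) ∈ AddSubmonoid.closure E

namespace ERing

variable {R : Type*} [Ring R]

/-- The positive cone `E⁺`: all finite sums of effects. -/
def Ep (S : ERing R) : Set R := (AddSubmonoid.closure S.E : Set R)

/-- The directed group `G = E⁺ − E⁺` (as a subset of `R`). -/
def G (S : ERing R) : Set R := {x | ∃ a ∈ S.Ep, ∃ b ∈ S.Ep, x = a - b}

/-- The partial order with positive cone `E⁺`: `g ≤ h` iff `h − g ∈ E⁺`. -/
def le (S : ERing R) (g h : R) : Prop := h - g ∈ S.Ep

/-- The set of projections: idempotent elements of `G`. -/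
def P (S : ERing R) : Set R := {p | p ∈ S.G ∧ p * p = p}

end ERing

theorem stmt16 {R : Type*} [Ring R] (S : ERing R) :
    ∀ e ∈ S.E,
      List.TFAE
        [∀ a ∈ S.E, ∀ b ∈ S.E, a + b ∈ S.E → S.le a e → S.le b e →
          S.le (a + b) e,
         ∀ d ∈ S.E, S.le d e → S.le d (1 - e) → d = 0,
         e * e = e] := by
  intro e he
  have hsub : ∀ x ∈ S.E, x ∈ AddSubmonoid.closure S.E := fun x hx =>
    AddSubmonoid.subset_closure hx
  have heE : e ∈ AddSubmonoid.closure S.E := hsub e he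
  have hce : (1 : R) - e ∈ AddSubmonoid.closure S.E := hsub _ (S.compl_mem e he)
  have hle : ∀ g h : R, S.le g h ↔ h - g ∈ AddSubmonoid.closure S.E := by
    intro g h; rfl
  tfae_have 1 → 2 := by
    intro h1 d hd hde hde'
    rw [hle] at hde hde'
    have hdeE : d + e ∈ S.E := by
      apply S.ax_ii
      · exact AddSubmonoid.add_mem _ (hsub d hd) heE
      · have h : (1 : R) - (d + e) = (1 - e) - d := by abel
        rw [h]; exact hde'
    have hres := h1 d hd e he hdeE (by rw [hle]; exact hde)
      (by rw [hle]; simpa using AddSubmonoid.zero_mem _)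
    rw [hle] at hres
    have hneg : -d ∈ AddSubmonoid.closure S.E := by
      have h : e - (d + e) = -d := by abel
      rw [← h]; exact hres
    exact S.ax_i d (hsub d hd) hneg
  tfae_have 2 → 3 := by
    intro h2
    have hsq : e * e ∈ AddSubmonoid.closure S.E := S.ax_iii e heE e heE rfl
    have hd : e - e * e ∈ AddSubmonoid.closure S.E := by
      have h := S.ax_iii e heE (1 - e) hce (by noncomm_ring)
      have heq : e * (1 - e) = e - e * e := by noncomm_ring
      rwa [heq] at h
    have hdE : e - e * e ∈ S.E := by
      apply S.ax_ii _ hd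
      have h : (1 : R) - (e - e * e) = (1 - e) + e * e := by abel
      rw [h]; exact AddSubmonoid.add_mem _ hce hsq
    have hz := h2 _ hdE (by rw [hle]; have h : e - (e - e * e) = e * e := by abel
                            rw [h]; exact hsq)
      (by rw [hle]
          have h := S.ax_iii (1 - e) hce (1 - e) hce rfl
          have heq : (1 - e) * (1 - e) = (1 - e) - (e - e * e) := by noncomm_ring
          rwa [heq] at h)
    exact (sub_eq_zero.mp hz).symm
  tfae_have 3 → 1 := by
    intro h3 a ha b hb hab hae hbe
    rw [hle] at hae hbe ⊢
    have h0 : ((1 : R) - e) * e = 0 := by rw [sub_mul, one_mul, h3, sub_self]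
    have key : ∀ x, x ∈ AddSubmonoid.closure S.E → e - x ∈ AddSubmonoid.closure S.E →
        e * x = x ∧ x * e = x := by
      intro x hx hex
      have h1 : (1 - e) * (e - x) * (1 - e) ∈ AddSubmonoid.closure S.E :=
        S.ax_iv _ hce _ hex
      have heq : (1 - e) * (e - x) * (1 - e) = -((1 - e) * x * (1 - e)) := by
        rw [show (1 - e) * (e - x) = -((1 - e) * x) by rw [mul_sub, h0, zero_sub], neg_mul]
      have hneg : -((1 - e) * x * (1 - e)) ∈ AddSubmonoid.closure S.E := heq ▸ h1
      have hpos : (1 - e) * x * (1 - e) ∈ AddSubmonoid.closure S.E := S.ax_iv _ hce _ hx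
      have hz : (1 - e) * x * (1 - e) = 0 := S.ax_i _ hpos hneg
      obtain ⟨hl, hr⟩ := S.ax_v _ hce _ hx hz
      constructor
      · rw [sub_mul, one_mul, sub_eq_zero] at hl; exact hl.symm
      · rw [mul_sub, mul_one, sub_eq_zero] at hr; exact hr.symm
    obtain ⟨hea, hae'⟩ := key a (hsub a ha) hae
    obtain ⟨heb, hbe'⟩ := key b (hsub b hb) hbe
    have hfin : e * (1 - (a + b)) * e ∈ AddSubmonoid.closure S.E :=
      S.ax_iv e heE _ (hsub _ (S.compl_mem _ hab))
    have heq : e * (1 - (a + b)) * e = e - (a + b) := by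
      rw [mul_sub, mul_one, mul_add, hea, heb, sub_mul, add_mul, h3, hae', hbe']
    rwa [heq] at hfin
  tfae_finish
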